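/- Let X be a set, let k ≥ 1, and let f_1, …, f_k : X → X be maps; for a word w ∈ {1,…,k}ⁿ write f_w for the corresponding n-fold composite, and for g : X → ℝ and Q ∈ X write S_n(g, Q) = Σ_{w ∈ {1,…,k}ⁿ} g(f_w(Q)). Let hX : X → ℝ with hX ≥ 1 pointwise, let h : X → ℝ, and let β > 0, C₃ ≥ 0, C ≥ 0, δ' ≥ 0, a ≥ 0, b ≥ 0 be real numbers with k²·δ' < β². Assume: (i) |Σ_{i=1}^k h(f_i(Q)) − β·h(Q)| ≤ C₃·√(hX(Q)) for all Q ∈ X; (ii) S_n(hX, Q) ≤ C·kⁿ·δ'ⁿ·hX(Q) for all n ≥ 0 and all Q ∈ X; (iii) |h(Q)| ≤ a·hX(Q) + b for all Q ∈ X. Let P ∈ X and let ĥ(P) = lim_{n→∞} β^{−n}·S_n(h, P) (this limit exists by (i) and (ii)). If ĥ(P) ≠ 0, then liminf_{n→∞} (1/k)·S_n(hX, P)^{1/n} ≥ β/k. -/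

import Mathlib

open Filter Topology

/-- `compWord f w P` is the composite `f_{w_1} ∘ ⋯ ∘ f_{w_n}` applied to `P`,
for the word `w = (w_1, …, w_n)` over the alphabet `Fin k`. -/
def compWord {X : Type*} {k : ℕ} (f : Fin k → X → X) : List (Fin k) → X → X
  | [], P => P
  | i :: w, P => f i (compWord f w P)

/-- `heightSum f g n P = Σ_{w ∈ {1,…,k}ⁿ} g (f_w P)`, the sum over all `kⁿ` words of length `n`. -/
noncomputable def heightSum {X : Type*} {k : ℕ} (f : Fin k → X → X) (g : X → ℝ)
    (n : ℕ) (P : X) : ℝ :=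
  ∑ w : Fin n → Fin k, g (compWord f (List.ofFn w) P)

/-- under the canonical-height hypotheses (i), (ii) together with the
comparison (iii) `|h(Q)| ≤ a·hX(Q) + b`, if the canonical height
`ĥ(P) = lim β^{−n}·S_n(h, P)` of a point `P` is nonzero, then the lower arithmetic degree
of `P` is at least `β/k`: `liminf (1/k)·S_n(hX, P)^{1/n} ≥ β/k`. -/
theorem canonical_height_nonzero_lower_degree {X : Type*} {k : ℕ} (hk : 1 ≤ k)
    (f : Fin k → X → X) (hX h : X → ℝ) (β C₃ C δ' a b : ℝ)
    (hβ : 0 < β) (hC₃ : 0 ≤ C₃) (hC : 0 ≤ C) (hδ' : 0 ≤ δ') (ha : 0 ≤ a) (hb : 0 ≤ b)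
    (hlt : (k : ℝ) ^ 2 * δ' < β ^ 2)
    (hX1 : ∀ Q : X, 1 ≤ hX Q)
    (hi : ∀ Q : X, |(∑ i : Fin k, h (f i Q)) - β * h Q| ≤ C₃ * Real.sqrt (hX Q))
    (hii : ∀ n : ℕ, ∀ Q : X, heightSum f hX n Q ≤ C * (k : ℝ) ^ n * δ' ^ n * hX Q)
    (hiii : ∀ Q : X, |h Q| ≤ a * hX Q + b)
    (P : X) (L : ℝ)
    (hlim : Tendsto (fun n : ℕ => heightSum f h n P / β ^ n) atTop (𝓝 L))
    (hL : L ≠ 0) :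
    β / (k : ℝ) ≤ Filter.liminf
      (fun n : ℕ => (1 / (k : ℝ)) * heightSum f hX n P ^ ((n : ℝ)⁻¹)) atTop := by
  classical
  set u : ℕ → ℝ := fun n => (1 / (k : ℝ)) * heightSum f hX n P ^ ((n : ℝ)⁻¹) with hu_def
  have hk0 : (0:ℝ) < k := by exact_mod_cast hk
  have hk1 : (1:ℝ) ≤ k := by exact_mod_cast hk
  -- lower bound k^n ≤ S_n(hX, P)
  have hSlb : ∀ n : ℕ, (k:ℝ)^n ≤ heightSum f hX n P := by
    intro n
    have hcard : ((k:ℝ)^n) = ∑ _w : Fin n → Fin k, (1:ℝ) := by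
      simp [Finset.sum_const, Finset.card_univ]
    rw [hcard]
    exact Finset.sum_le_sum fun w _ => hX1 _
  have hSpos : ∀ n, 0 < heightSum f hX n P :=
    fun n => lt_of_lt_of_le (pow_pos hk0 n) (hSlb n)
  -- `heightSum f hX 0 P = hX P`, hence `C ≥ 1`
  have hS0 : heightSum f hX 0 P = hX P := by
    simp [heightSum, compWord]
  have hC1 : (1:ℝ) ≤ C := by
    have h0 := hii 0 P
    rw [hS0] at h0
    have h1 := hX1 P
    nlinarith
  -- upper bound: S_n ≤ M ^ n for n ≥ 1
  set M : ℝ := C * hX P * ((k:ℝ) * δ' + 1) with hM_def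
  have hM1 : (1:ℝ) ≤ M := by
    have h1 : (1:ℝ) ≤ C * hX P := by nlinarith [hX1 P]
    have h2 : (1:ℝ) ≤ (k:ℝ) * δ' + 1 := by nlinarith [mul_nonneg hk0.le hδ']
    calc (1:ℝ) = 1 * 1 := by ring
      _ ≤ (C * hX P) * ((k:ℝ) * δ' + 1) := mul_le_mul h1 h2 zero_le_one (by linarith)
      _ = M := by rw [hM_def]
  have hSub : ∀ n : ℕ, 1 ≤ n → heightSum f hX n P ≤ M ^ n := by
    intro n hn
    have h1 := hii n P
    have hCn : C ≤ C ^ n := le_self_pow₀ hC1 (by omega)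
    have hXn : hX P ≤ (hX P) ^ n := le_self_pow₀ (hX1 P) (by omega)
    have hkd : (k:ℝ)^n * δ'^n ≤ ((k:ℝ) * δ' + 1) ^ n := by
      rw [← mul_pow]
      exact pow_le_pow_left₀ (by positivity) (by linarith) n
    calc heightSum f hX n P ≤ C * (k:ℝ)^n * δ'^n * hX P := h1
      _ ≤ C ^ n * ((k:ℝ) * δ' + 1) ^ n * (hX P) ^ n := by
          have hC0 : (0:ℝ) ≤ C := hC
          have h2 : C * ((k:ℝ)^n * δ'^n) * hX P ≤ C ^ n * ((k:ℝ)*δ'+1)^n * (hX P)^n := by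
            apply mul_le_mul
            · apply mul_le_mul hCn hkd (by positivity) (by positivity)
            · exact hXn
            · linarith [hX1 P]
            · positivity
          linarith [h2, (by ring : C * (k:ℝ)^n * δ'^n * hX P = C * ((k:ℝ)^n * δ'^n) * hX P)]
      _ = M ^ n := by rw [hM_def, mul_pow, mul_pow]; ring
  -- u is eventually bounded above by M, hence cobounded below
  have hub : ∀ᶠ n in atTop, u n ≤ M := by
    filter_upwards [eventually_ge_atTop 1] with n hn
    have hMn : (heightSum f hX n P) ^ ((n:ℝ)⁻¹) ≤ (M ^ n) ^ ((n:ℝ)⁻¹) :=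
      Real.rpow_le_rpow (hSpos n).le (hSub n hn) (by positivity)
    have hMn' : ((M:ℝ) ^ n) ^ ((n:ℝ)⁻¹) = M := by
      rw [← Real.rpow_natCast M n, ← Real.rpow_mul (by linarith), mul_inv_cancel₀ (Nat.cast_ne_zero.mpr (by omega)), Real.rpow_one]
    rw [hMn'] at hMn
    have : u n ≤ (1/(k:ℝ)) * M := by
      rw [hu_def]
      exact mul_le_mul_of_nonneg_left hMn (by positivity)
    calc u n ≤ (1/(k:ℝ)) * M := this
      _ ≤ 1 * M := by
          apply mul_le_mul_of_nonneg_right _ (by linarith)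
          rw [div_le_one hk0]; exact hk1
      _ = M := one_mul M
  have hcob : atTop.IsCoboundedUnder (· ≥ ·) u :=
    Filter.isCoboundedUnder_ge_of_eventually_le atTop hub
  -- key rpow identity
  have hbn : ∀ n : ℕ, 1 ≤ n → ((β:ℝ) ^ n) ^ ((n:ℝ)⁻¹) = β := by
    intro n hn
    rw [← Real.rpow_natCast β n, ← Real.rpow_mul hβ.le,
      mul_inv_cancel₀ (Nat.cast_ne_zero.mpr (by omega)), Real.rpow_one]
  rcases le_or_gt β (k:ℝ) with hβk | hβk
  · -- trivial case β ≤ k : each term is eventually ≥ 1 ≥ β/k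
    apply Filter.le_liminf_of_le hcob
    filter_upwards [eventually_ge_atTop 1] with n hn
    have hkn : ((k:ℝ) ^ n) ^ ((n:ℝ)⁻¹) = (k:ℝ) := by
      rw [← Real.rpow_natCast (k:ℝ) n, ← Real.rpow_mul hk0.le,
        mul_inv_cancel₀ (Nat.cast_ne_zero.mpr (by omega)), Real.rpow_one]
    have h1 : (k:ℝ) ≤ (heightSum f hX n P) ^ ((n:ℝ)⁻¹) := by
      rw [← hkn]
      exact Real.rpow_le_rpow (by positivity) (hSlb n) (by positivity)
    have : β / (k:ℝ) ≤ 1 := by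
      rw [div_le_one hk0]; exact hβk
    have h2 : (1:ℝ) ≤ u n := by
      rw [hu_def]
      calc (1:ℝ) = 1/(k:ℝ) * (k:ℝ) := by field_simp
        _ ≤ 1/(k:ℝ) * heightSum f hX n P ^ ((n:ℝ)⁻¹) :=
            mul_le_mul_of_nonneg_left h1 (by positivity)
    linarith
  · -- main case k < β
    have hL' : 0 < |L| := abs_pos.mpr hL
    -- (B) : |S_n(h,P)| ≤ a S_n(hX,P) + b k^n
    have hB : ∀ n : ℕ, |heightSum f h n P| ≤ a * heightSum f hX n P + b * (k:ℝ)^n := by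
      intro n
      calc |heightSum f h n P| ≤ ∑ w : Fin n → Fin k, |h (compWord f (List.ofFn w) P)| :=
            Finset.abs_sum_le_sum_abs _ _
        _ ≤ ∑ w : Fin n → Fin k, (a * hX (compWord f (List.ofFn w) P) + b) :=
            Finset.sum_le_sum fun w _ => hiii _
        _ = a * heightSum f hX n P + b * (k:ℝ)^n := by
            rw [Finset.sum_add_distrib, ← Finset.mul_sum, Finset.sum_const, Finset.card_univ]
            simp [heightSum, nsmul_eq_mul, mul_comm]
    -- E1 : eventually |L|/2 * β^n ≤ |S_n(h,P)|
    have hE1 : ∀ᶠ n in atTop, |L|/2 * β^n ≤ |heightSum f h n P| := by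
      have habs : Tendsto (fun n : ℕ => |heightSum f h n P / β^n|) atTop (𝓝 |L|) := hlim.abs
      filter_upwards [habs.eventually (eventually_gt_nhds (by linarith : |L|/2 < |L|))] with n hn
      have hpb : (0:ℝ) < β ^ n := pow_pos hβ n
      rw [abs_div, abs_of_pos hpb] at hn
      rw [lt_div_iff₀ hpb] at hn
      linarith
    -- E2 : eventually b * k^n ≤ |L|/4 * β^n
    have hE2 : ∀ᶠ n in atTop, b * (k:ℝ)^n ≤ |L|/4 * β^n := by
      have hr : (k:ℝ)/β < 1 := by rw [div_lt_one hβ]; exact hβk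
      have hr0 : (0:ℝ) ≤ (k:ℝ)/β := by positivity
      have ht : Tendsto (fun n : ℕ => b * ((k:ℝ)/β)^n) atTop (𝓝 (b * 0)) :=
        (tendsto_pow_atTop_nhds_zero_of_lt_one hr0 hr).const_mul b
      rw [mul_zero] at ht
      filter_upwards [ht.eventually (eventually_lt_nhds (by positivity : (0:ℝ) < |L|/4))] with n hn
      have hpb : (0:ℝ) < β ^ n := pow_pos hβ n
      have : b * ((k:ℝ)/β)^n * β^n = b * (k:ℝ)^n := by
        rw [div_pow, mul_assoc, div_mul_cancel₀ _ hpb.ne']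
      nlinarith
    -- a S_n ≥ |L|/4 β^n eventually
    have hE3 : ∀ᶠ n in atTop, |L|/4 * β^n ≤ a * heightSum f hX n P := by
      filter_upwards [hE1, hE2] with n h1 h2
      have := hB n
      linarith
    -- a > 0
    have ha' : 0 < a := by
      obtain ⟨n, hn⟩ := hE3.exists
      rcases ha.lt_or_eq with h | h
      · exact h
      · exfalso
        rw [← h, zero_mul] at hn
        have : (0:ℝ) < |L|/4 * β^n := by positivity
        linarith
    set c : ℝ := |L| / (4 * a) with hc_def
    have hc : 0 < c := by positivity
    have hE4 : ∀ᶠ n in atTop, c * β^n ≤ heightSum f hX n P := by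
      filter_upwards [hE3] with n hn
      rw [hc_def]
      rw [div_mul_eq_mul_div, div_le_iff₀ (by positivity)]
      calc |L| * β^n = 4 * (|L|/4 * β^n) := by ring
        _ ≤ 4 * (a * heightSum f hX n P) := by linarith
        _ = heightSum f hX n P * (4 * a) := by ring
    -- auxiliary sequence v n = (1/k) * c^(1/n) * β
    set v : ℕ → ℝ := fun n => (1/(k:ℝ)) * c ^ ((n:ℝ)⁻¹) * β with hv_def
    have hv_tendsto : Tendsto v atTop (𝓝 (β / (k:ℝ))) := by
      have hinv : Tendsto (fun n : ℕ => ((n:ℝ))⁻¹) atTop (𝓝 0) :=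
        tendsto_inv_atTop_nhds_zero_nat
      have hcont : ContinuousAt (fun x : ℝ => c ^ x) 0 :=
        Real.continuousAt_const_rpow hc.ne'
      have h1 : Tendsto (fun n : ℕ => c ^ ((n:ℝ)⁻¹)) atTop (𝓝 1) := by
        have := hcont.tendsto.comp hinv
        simpa [Function.comp_def, Real.rpow_zero] using this
      have h2 : Tendsto v atTop (𝓝 ((1/(k:ℝ)) * 1 * β)) :=
        (h1.const_mul (1/(k:ℝ))).mul_const β
      have : (1/(k:ℝ)) * 1 * β = β / (k:ℝ) := by field_simp
      rwa [this] at h2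
    have hvu : ∀ᶠ n in atTop, v n ≤ u n := by
      filter_upwards [hE4, eventually_ge_atTop 1] with n hn hn1
      have h1 : (c * β^n) ^ ((n:ℝ)⁻¹) ≤ (heightSum f hX n P) ^ ((n:ℝ)⁻¹) :=
        Real.rpow_le_rpow (by positivity) hn (by positivity)
      have h2 : (c * β^n) ^ ((n:ℝ)⁻¹) = c ^ ((n:ℝ)⁻¹) * β := by
        rw [Real.mul_rpow hc.le (by positivity), hbn n hn1]
      rw [h2] at h1
      rw [hv_def, hu_def]
      have : (1/(k:ℝ)) * (c ^ ((n:ℝ)⁻¹) * β) ≤ (1/(k:ℝ)) * (heightSum f hX n P) ^ ((n:ℝ)⁻¹) :=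
        mul_le_mul_of_nonneg_left h1 (by positivity)
      linarith [this, (by ring : (1/(k:ℝ)) * (c ^ ((n:ℝ)⁻¹) * β) = (1/(k:ℝ)) * c ^ ((n:ℝ)⁻¹) * β)]
    have hbdd_v : atTop.IsBoundedUnder (· ≥ ·) v := hv_tendsto.isBoundedUnder_ge
    have hfin := Filter.liminf_le_liminf hvu hbdd_v hcob
    rwa [hv_tendsto.liminf_eq] at hfin
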